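/- For every integer N ≥ 1, H*(U_{N+1}) > H*(U_N), where U_N denotes the uniform distribution on an alphabet of size N. Equivalently, the map N ↦ (1/2)·log₂( 4 (1/N)^{1/N} / (1/N + 1)^{1/N + 1} ) is strictly increasing in N. -/

import Mathlib

/-- Lin entropy of a distribution on a finite alphabet. -/
noncomputable def linEntropy {X : Type*} [Fintype X] (p : X → ℝ) : ℝ :=
  ∑ x, p x * ((1 / 2) * Real.logb 2 (4 * p x ^ p x / (p x + 1) ^ (p x + 1)))

lemma phi_anti : StrictAntiOn (fun x : ℝ => x * Real.log x - (x + 1) * Real.log (x + 1))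
    (Set.Ici 0) := by
  apply strictAntiOn_of_deriv_neg (convex_Ici 0)
  · exact (Real.continuous_mul_log.sub
      (Real.continuous_mul_log.comp (continuous_id.add continuous_const))).continuousOn
  · intro x hx
    rw [interior_Ici] at hx
    have hx0 : (0:ℝ) < x := hx
    have h1 : HasDerivAt (fun x : ℝ => x * Real.log x) (Real.log x + 1) x :=
      Real.hasDerivAt_mul_log (ne_of_gt hx0)
    have h2 : HasDerivAt (fun x : ℝ => (x + 1) * Real.log (x + 1)) (Real.log (x + 1) + 1) x := by
      have hadd : HasDerivAt (fun x : ℝ => x + 1) 1 x := (hasDerivAt_id x).add_const 1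
      have := (Real.hasDerivAt_mul_log (show x + 1 ≠ 0 by linarith)).comp x hadd
      rw [mul_one] at this
      exact this
    have h3 := h1.sub h2
    rw [show (fun x : ℝ => x * Real.log x - (x + 1) * Real.log (x + 1)) = ((fun x : ℝ => x * Real.log x) - fun x => (x + 1) * Real.log (x + 1)) from rfl, h3.deriv]
    have : Real.log x < Real.log (x + 1) := Real.log_lt_log hx0 (by linarith)
    linarith

lemma log_expand (p : ℝ) (hp : 0 < p) :
    Real.log (4 * p ^ p / (p + 1) ^ (p + 1)) =
      Real.log 4 + (p * Real.log p - (p + 1) * Real.log (p + 1)) := by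
  rw [Real.log_div (by positivity) (by positivity),
    Real.log_mul (by norm_num) (by positivity), Real.log_rpow hp,
    Real.log_rpow (by linarith)]
  ring

lemma key {a b : ℝ} (ha : 0 < a) (hab : a < b) :
    Real.logb 2 (4 * b ^ b / (b + 1) ^ (b + 1)) <
      Real.logb 2 (4 * a ^ a / (a + 1) ^ (a + 1)) := by
  have hb : 0 < b := ha.trans hab
  have h2 : (0:ℝ) < Real.log 2 := Real.log_pos (by norm_num)
  have hphi := phi_anti (le_of_lt ha) (le_of_lt hb) hab
  simp only at hphi
  have hlog : Real.log (4 * b ^ b / (b + 1) ^ (b + 1)) <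
      Real.log (4 * a ^ a / (a + 1) ^ (a + 1)) := by
    rw [log_expand a ha, log_expand b hb]; linarith
  rw [Real.logb, Real.logb, div_eq_mul_inv, div_eq_mul_inv]
  exact mul_lt_mul_of_pos_right hlog (inv_pos.mpr h2)

theorem linEntropy_uniform_strictMono (N : ℕ) (hN : 1 ≤ N) :
    linEntropy (fun _ : Fin (N + 1) => (1 : ℝ) / (N + 1)) >
        linEntropy (fun _ : Fin N => (1 : ℝ) / N) ∧
      (1 / 2) * Real.logb 2
          (4 * ((1 : ℝ) / (N + 1)) ^ ((1 : ℝ) / (N + 1)) /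
            ((1 : ℝ) / (N + 1) + 1) ^ ((1 : ℝ) / (N + 1) + 1)) >
        (1 / 2) * Real.logb 2
          (4 * ((1 : ℝ) / N) ^ ((1 : ℝ) / N) /
            ((1 : ℝ) / N + 1) ^ ((1 : ℝ) / N + 1)) := by
  have hN0 : (0:ℝ) < N := by exact_mod_cast hN
  have ha : (0:ℝ) < 1 / (N + 1) := by positivity
  have hab : (1:ℝ) / (N + 1) < 1 / N := by
    apply div_lt_div_of_pos_left one_pos hN0
    linarith
  have hkey := key ha hab
  have hmain : (1 / 2 : ℝ) * Real.logb 2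
          (4 * ((1 : ℝ) / (N + 1)) ^ ((1 : ℝ) / (N + 1)) /
            ((1 : ℝ) / (N + 1) + 1) ^ ((1 : ℝ) / (N + 1) + 1)) >
        (1 / 2) * Real.logb 2
          (4 * ((1 : ℝ) / N) ^ ((1 : ℝ) / N) /
            ((1 : ℝ) / N + 1) ^ ((1 : ℝ) / N + 1)) := by
    have := hkey
    linarith
  refine ⟨?_, hmain⟩
  have hsum : ∀ (M : ℕ), (0:ℝ) < M → linEntropy (fun _ : Fin M => (1 : ℝ) / M) =
      (1 / 2) * Real.logb 2
        (4 * ((1 : ℝ) / M) ^ ((1 : ℝ) / M) / ((1 : ℝ) / M + 1) ^ ((1 : ℝ) / M + 1)) := by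
    intro M hM
    unfold linEntropy
    rw [Finset.sum_const, Finset.card_univ, Fintype.card_fin, nsmul_eq_mul]
    field_simp
  have h1 := hsum (N + 1) (by positivity)
  push_cast at h1
  rw [hsum N hN0, h1]
  exact hmain
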